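/- arXiv:1011.1313 — 2 statements merged into one kernel-verified Lean document; each statement's English description precedes it below -/
import Mathlib

section
/- If t > 0 and the holomorphic quadratic differential φ is not identically zero, then every Γ-invariant C² solution u of the Gauss equation Δu + 1 − e^{2u} − t²y⁴|φ(z)|²e^{−2u} = 0 satisfies the strict inequality u(z) < 0 for all z ∈ ℍ. -/
open Complex MeasureTheory Real Filter

noncomputable section

/-- The upper half-plane, viewed as a subset of `ℂ`. -/
def UH : Set ℂ := {z : ℂ | 0 < z.im}

/-- The Möbius action of `SL(2, ℝ)` on the upper half-plane (as a map on `ℂ`). -/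
def moebius (γ : Matrix.SpecialLinearGroup (Fin 2) ℝ) (z : ℂ) : ℂ :=
  (((γ 0 0 : ℝ) : ℂ) * z + ((γ 0 1 : ℝ) : ℂ)) / (((γ 1 0 : ℝ) : ℂ) * z + ((γ 1 1 : ℝ) : ℂ))

/-- The hyperbolic Laplacian `Δu = y² (∂²u/∂x² + ∂²u/∂y²)`. -/
def hypLap (u : ℂ → ℝ) (z : ℂ) : ℝ :=
  z.im ^ 2 * (iteratedFDeriv ℝ 2 u z ![1, 1] + iteratedFDeriv ℝ 2 u z ![Complex.I, Complex.I])

/-- The squared Euclidean gradient `|∇u|² = (∂u/∂x)² + (∂u/∂y)²`. -/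
def gradSq (u : ℂ → ℝ) (z : ℂ) : ℝ :=
  (fderiv ℝ u z 1) ^ 2 + (fderiv ℝ u z Complex.I) ^ 2

/-- `u` is invariant under the Möbius action of the subgroup `Γ` on the upper half-plane. -/
def GammaInv (Γ : Subgroup (Matrix.SpecialLinearGroup (Fin 2) ℝ)) (u : ℂ → ℝ) : Prop :=
  ∀ γ ∈ Γ, ∀ z ∈ UH, u (moebius γ z) = u z

/-- The Gauss equation `Δu + 1 - e^{2u} - t² y⁴ |φ(z)|² e^{-2u} = 0` on the upper half-plane. -/
def GaussEq (φ : ℂ → ℂ) (t : ℝ) (u : ℂ → ℝ) : Prop :=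
  ∀ z ∈ UH, hypLap u z + 1 - Real.exp (2 * u z)
    - t ^ 2 * z.im ^ 4 * ‖φ z‖ ^ 2 * Real.exp (-2 * u z) = 0

/-- Integral over a fundamental domain `D` with respect to the hyperbolic
area measure `dμ = y⁻² dx dy`. -/
def hInt (D : Set ℂ) (f : ℂ → ℝ) : ℝ := ∫ z in D, f z * (z.im ^ 2)⁻¹


section AuxiliaryLemmas
open Set Metric


lemma lineD {f : ℂ → ℝ} {z v : ℂ} {s : ℝ} (hf : DifferentiableAt ℝ f (z + s • v)) :
    HasDerivAt (fun t : ℝ => f (z + t • v)) (fderiv ℝ f (z + s • v) v) s := by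
  have hline : HasDerivAt (fun t : ℝ => z + t • v) v s := by
    simpa using ((hasDerivAt_id s).smul_const v).const_add z
  exact hf.hasFDerivAt.comp_hasDerivAt s hline

lemma lineD2 {f : ℂ → ℝ} {z v : ℂ} (hf' : DifferentiableAt ℝ (fderiv ℝ f) z) :
    HasDerivAt (fun t : ℝ => fderiv ℝ f (z + t • v) v) (fderiv ℝ (fderiv ℝ f) z v v) 0 := by
  have hline : HasDerivAt (fun t : ℝ => z + t • v) v 0 := by
    simpa using ((hasDerivAt_id (0:ℝ)).smul_const v).const_add z
  have h0 : z + (0:ℝ) • v = z := by simp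
  have h1 : HasDerivAt (fun t : ℝ => fderiv ℝ f (z + t • v)) (fderiv ℝ (fderiv ℝ f) z v) 0 := by
    have := HasFDerivAt.comp_hasDerivAt (l := fderiv ℝ f) (l' := fderiv ℝ (fderiv ℝ f) z) 0
      (by rw [h0]; exact hf'.hasFDerivAt) hline
    exact this
  have := ((ContinuousLinearMap.apply ℝ ℝ v).hasFDerivAt.comp_hasDerivAt 0 h1)
  exact this

lemma deriv2_test {g G : ℝ → ℝ} {δ : ℝ} (hδ : 0 < δ) {c : ℝ}
    (hg : ∀ s ∈ Set.Ioo (-δ) δ, HasDerivAt g (G s) s)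
    (hG : HasDerivAt G c 0)
    (hmax : ∀ s ∈ Set.Ioo (-δ) δ, g s ≤ g 0) : c ≤ 0 := by
  have h0mem : (0:ℝ) ∈ Set.Ioo (-δ) δ := by constructor <;> linarith
  have hnb : Set.Ioo (-δ) δ ∈ nhds (0:ℝ) := Ioo_mem_nhds (by linarith) hδ
  have hlm : IsLocalMax g 0 := Filter.eventually_of_mem hnb hmax
  have hG0 : G 0 = 0 := by
    have := hlm.deriv_eq_zero
    rwa [(hg 0 h0mem).deriv] at this
  by_contra hc
  push_neg at hc
  have hslope : Filter.Tendsto (slope G 0) (nhdsWithin 0 {(0:ℝ)}ᶜ) (nhds c) :=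
    hasDerivAt_iff_tendsto_slope.1 hG
  have hev : ∀ᶠ s in nhdsWithin 0 {(0:ℝ)}ᶜ, 0 < slope G 0 s :=
    hslope.eventually (eventually_gt_nhds hc)
  rw [eventually_nhdsWithin_iff, Metric.eventually_nhds_iff] at hev
  obtain ⟨ε, hε, hev⟩ := hev
  set m := min (ε/2) (δ/2) with hm
  have hm0 : 0 < m := by positivity
  have hmδ : m < δ := by
    have : m ≤ δ/2 := min_le_right _ _
    linarith
  have hGpos : ∀ s ∈ Set.Ioo (0:ℝ) m, 0 < G s := by
    intro s hs
    have h1 : 0 < slope G 0 s := by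
      apply hev (y := s)
      · simp only [Real.dist_eq, sub_zero]
        rw [abs_of_pos hs.1]
        have : m ≤ ε/2 := min_le_left _ _
        have := hs.2; linarith
      · exact ne_of_gt hs.1
    rw [slope_def_field, hG0, sub_zero, sub_zero] at h1
    have := mul_pos h1 hs.1
    rwa [div_mul_cancel₀ _ (ne_of_gt hs.1)] at this
  have hIccsub : Set.Icc (0:ℝ) m ⊆ Set.Ioo (-δ) δ := by
    intro s hs
    exact ⟨by linarith [hs.1], lt_of_le_of_lt hs.2 hmδ⟩
  have hcont : ContinuousOn g (Set.Icc 0 m) := fun s hs =>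
    ((hg s (hIccsub hs)).continuousAt).continuousWithinAt
  have hmono : StrictMonoOn g (Set.Icc 0 m) := by
    apply strictMonoOn_of_deriv_pos (convex_Icc 0 m) hcont
    intro s hs
    rw [interior_Icc] at hs
    rw [(hg s (hIccsub ⟨le_of_lt hs.1, le_of_lt hs.2⟩)).deriv]
    exact hGpos s hs
  have h1 : g 0 < g m :=
    hmono (Set.left_mem_Icc.2 (le_of_lt hm0)) (Set.right_mem_Icc.2 (le_of_lt hm0)) hm0
  have h2 : g m ≤ g 0 := hmax m ⟨by linarith, hmδ⟩
  linarith

lemma diffAt_of_cd2 {f : ℂ → ℝ} {U : Set ℂ} (hU : IsOpen U) (hf : ContDiffOn ℝ 2 f U)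
    {x : ℂ} (hx : x ∈ U) : DifferentiableAt ℝ f x :=
  (hf.contDiffAt (hU.mem_nhds hx)).differentiableAt (by norm_num)

lemma diffAt2_of_cd2 {f : ℂ → ℝ} {U : Set ℂ} (hU : IsOpen U) (hf : ContDiffOn ℝ 2 f U)
    {x : ℂ} (hx : x ∈ U) : DifferentiableAt ℝ (fderiv ℝ f) x := by
  have h := (hf.contDiffAt (hU.mem_nhds hx)).fderiv_right (m := 1) (by norm_num)
  exact h.differentiableAt (by norm_num)

lemma maxLap {f : ℂ → ℝ} {U : Set ℂ} (hU : IsOpen U) (hf : ContDiffOn ℝ 2 f U) {x : ℂ}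
    (hx : x ∈ U) (hmax : ∀ z ∈ U, f z ≤ f x) (v : ℂ) : fderiv ℝ (fderiv ℝ f) x v v ≤ 0 := by
  obtain ⟨δ₀, hδ₀, hball⟩ := Metric.isOpen_iff.1 hU x hx
  set δ := δ₀ / (‖v‖ + 1) with hδdef
  have hδ : 0 < δ := by positivity
  have hmem : ∀ s ∈ Set.Ioo (-δ) δ, x + s • v ∈ U := by
    intro s hs
    apply hball
    rw [Metric.mem_ball, dist_eq_norm]
    have habs : |s| < δ := abs_lt.2 ⟨hs.1, hs.2⟩
    have h1 : ‖x + s • v - x‖ = |s| * ‖v‖ := by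
      rw [add_sub_cancel_left, norm_smul, Real.norm_eq_abs]
    rw [h1]
    calc |s| * ‖v‖ ≤ |s| * (‖v‖ + 1) := by
          apply mul_le_mul_of_nonneg_left (by linarith) (abs_nonneg s)
      _ < δ * (‖v‖ + 1) := by
          apply mul_lt_mul_of_pos_right habs (by positivity)
      _ = δ₀ := by
          rw [hδdef]; field_simp
  apply deriv2_test (g := fun s : ℝ => f (x + s • v))
    (G := fun s : ℝ => fderiv ℝ f (x + s • v) v) hδ
  · intro s hs
    exact lineD (diffAt_of_cd2 hU hf (hmem s hs))
  · exact lineD2 (diffAt2_of_cd2 hU hf hx)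
  · intro s hs
    simpa using hmax _ (hmem s hs)

def bar (α : ℝ) (p : ℂ) : ℂ → ℝ :=
  fun z => Real.exp (-α * ((z.re - p.re)^2 + (z.im - p.im)^2))

lemma bar_contDiff (α : ℝ) (p : ℂ) : ContDiff ℝ 2 (bar α p) := by
  have hre : ContDiff ℝ 2 (fun z : ℂ => z.re) := Complex.reCLM.contDiff
  have him : ContDiff ℝ 2 (fun z : ℂ => z.im) := Complex.imCLM.contDiff
  have hin : ContDiff ℝ 2 (fun z : ℂ => -α * ((z.re - p.re)^2 + (z.im - p.im)^2)) :=
    contDiff_const.mul (((hre.sub contDiff_const).pow 2).add ((him.sub contDiff_const).pow 2))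
  exact hin.exp

lemma quad1 (α c e : ℝ) (s : ℝ) :
    HasDerivAt (fun s : ℝ => Real.exp (-α * ((e + s)^2 + c)))
      (Real.exp (-α * ((e + s)^2 + c)) * (-2*α*(e+s))) s := by
  have hes : HasDerivAt (fun s : ℝ => e + s) 1 s := (hasDerivAt_id s).const_add e
  have h1 : HasDerivAt (fun s : ℝ => -α * ((e + s)^2 + c)) (-2*α*(e+s)) s := by
    have := ((hes.pow 2).add_const c).const_mul (-α)
    refine this.congr_deriv ?_
    ring
  exact h1.exp

lemma quad2 (α c e : ℝ) :
    HasDerivAt (fun s : ℝ => Real.exp (-α * ((e + s)^2 + c)) * (-2*α*(e+s)))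
      (Real.exp (-α * (e^2 + c)) * (4*α^2*e^2 - 2*α)) 0 := by
  have h1 := quad1 α c e 0
  have hes : HasDerivAt (fun s : ℝ => -2*α*(e + s)) (-2*α) 0 := by
    simpa using ((hasDerivAt_id (0:ℝ)).const_add e).const_mul (-2*α)
  have := h1.mul hes
  refine this.congr_deriv ?_
  simp
  ring

lemma bar_d2 (α : ℝ) (p z : ℂ) :
    fderiv ℝ (fderiv ℝ (bar α p)) z 1 1 + fderiv ℝ (fderiv ℝ (bar α p)) z Complex.I Complex.I
      = (4*α^2*((z.re - p.re)^2 + (z.im - p.im)^2) - 4*α) * bar α p z := by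
  have hbd : ∀ ζ, DifferentiableAt ℝ (bar α p) ζ := fun ζ =>
    ((bar_contDiff α p).differentiable (by norm_num)).differentiableAt
  have hbd2 : ∀ ζ, DifferentiableAt ℝ (fderiv ℝ (bar α p)) ζ := fun ζ =>
    (((bar_contDiff α p).fderiv_right (m := 1) (by norm_num)).differentiable
      (by norm_num)).differentiableAt
  have key1 : fderiv ℝ (fderiv ℝ (bar α p)) z 1 1
      = Real.exp (-α * ((z.re - p.re)^2 + (z.im - p.im)^2)) * (4*α^2*(z.re - p.re)^2 - 2*α) := by
    set e := z.re - p.re with he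
    set c := (z.im - p.im)^2 with hc
    have hfun : (fun s : ℝ => bar α p (z + s • (1:ℂ)))
        = fun s : ℝ => Real.exp (-α * ((e + s)^2 + c)) := by
      funext s
      simp only [bar, Complex.real_smul, Complex.add_re, Complex.add_im, Complex.mul_re,
        Complex.mul_im, Complex.ofReal_re, Complex.ofReal_im, Complex.one_re, Complex.one_im]
      congr 1
      rw [he, hc]; ring
    have hG : ∀ s : ℝ, fderiv ℝ (bar α p) (z + s • (1:ℂ)) 1
        = Real.exp (-α * ((e + s)^2 + c)) * (-2*α*(e+s)) := by
      intro s
      have h1 := lineD (f := bar α p) (z := z) (v := (1:ℂ)) (s := s) (hbd _)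
      rw [hfun] at h1
      exact h1.unique (quad1 α c e s)
    have h2 := lineD2 (f := bar α p) (z := z) (v := (1:ℂ)) (hbd2 z)
    rw [funext hG] at h2
    have h3 := h2.unique (quad2 α c e)
    rw [h3]
    all_goals ring_nf
  have keyI : fderiv ℝ (fderiv ℝ (bar α p)) z Complex.I Complex.I
      = Real.exp (-α * ((z.re - p.re)^2 + (z.im - p.im)^2)) * (4*α^2*(z.im - p.im)^2 - 2*α) := by
    set e := z.im - p.im with he
    set c := (z.re - p.re)^2 with hc
    have hfun : (fun s : ℝ => bar α p (z + s • Complex.I))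
        = fun s : ℝ => Real.exp (-α * ((e + s)^2 + c)) := by
      funext s
      simp only [bar, Complex.real_smul, Complex.add_re, Complex.add_im, Complex.mul_re,
        Complex.mul_im, Complex.ofReal_re, Complex.ofReal_im, Complex.I_re, Complex.I_im]
      congr 1
      rw [he, hc]; ring
    have hG : ∀ s : ℝ, fderiv ℝ (bar α p) (z + s • Complex.I) Complex.I
        = Real.exp (-α * ((e + s)^2 + c)) * (-2*α*(e+s)) := by
      intro s
      have h1 := lineD (f := bar α p) (z := z) (v := Complex.I) (s := s) (hbd _)
      rw [hfun] at h1
      exact h1.unique (quad1 α c e s)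
    have h2 := lineD2 (f := bar α p) (z := z) (v := Complex.I) (hbd2 z)
    rw [funext hG] at h2
    have h3 := h2.unique (quad2 α c e)
    rw [h3]
    all_goals ring_nf
  rw [key1, keyI, bar]
  ring

lemma lap_add {u h : ℂ → ℝ} {U : Set ℂ} (hU : IsOpen U) (hu : ContDiffOn ℝ 2 u U)
    (hh : ContDiff ℝ 2 h) (ε : ℝ) {m : ℂ} (hm : m ∈ U) (v : ℂ) :
    fderiv ℝ (fderiv ℝ (fun z => u z + ε * h z)) m v v
      = fderiv ℝ (fderiv ℝ u) m v v + ε * fderiv ℝ (fderiv ℝ h) m v v := by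
  have hhd : ∀ ζ, DifferentiableAt ℝ h ζ := fun ζ =>
    (hh.differentiable (by norm_num)).differentiableAt
  have hhd2 : DifferentiableAt ℝ (fderiv ℝ h) m :=
    ((hh.fderiv_right (m := 1) (by norm_num)).differentiable (by norm_num)).differentiableAt
  have h1 : ∀ ζ ∈ U, fderiv ℝ (fun z => u z + ε * h z) ζ
      = fderiv ℝ u ζ + ε • fderiv ℝ h ζ := by
    intro ζ hζ
    rw [fderiv_fun_add (diffAt_of_cd2 hU hu hζ) ((hhd ζ).const_mul ε),
      fderiv_const_mul (hhd ζ) ε]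
  have hev : fderiv ℝ (fun z => u z + ε * h z)
      =ᶠ[nhds m] (fun ζ => fderiv ℝ u ζ + ε • fderiv ℝ h ζ) :=
    Filter.eventually_of_mem (hU.mem_nhds hm) h1
  rw [hev.fderiv_eq, fderiv_fun_add (g := fun ζ => ε • fderiv ℝ h ζ) (diffAt2_of_cd2 hU hu hm)
    (hhd2.const_smul ε),
    fderiv_fun_const_smul hhd2 ε]
  simp


lemma hUopen : IsOpen UH := isOpen_Ioi.preimage Complex.continuous_im

lemma hQ (w z : ℂ) : (z.re - w.re)^2 + (z.im - w.im)^2 = dist z w ^ 2 := by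
  rw [Complex.dist_eq, Complex.sq_norm, Complex.normSq_apply, Complex.sub_re, Complex.sub_im]
  ring

set_option maxHeartbeats 2000000 in
lemma hopf (u : ℂ → ℝ) (hu : ContDiffOn ℝ 2 u UH)
    (hle : ∀ z ∈ UH, u z ≤ 0)
    (hS : ∀ z ∈ UH, 2 * u z ≤ z.im^2 *
      (fderiv ℝ (fderiv ℝ u) z 1 1 + fderiv ℝ (fderiv ℝ u) z Complex.I Complex.I))
    {p₀ : ℂ} (hp₀ : p₀ ∈ UH) (hup₀ : u p₀ = 0)
    {w : ℂ} (hw : w ∈ Metric.ball p₀ (p₀.im / 8)) : u w = 0 := by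
  have hp₀im : 0 < p₀.im := hp₀
  set ρ : ℝ := p₀.im / 2 with hρdef
  clear_value ρ
  have hρ : 0 < ρ := by rw [hρdef]; positivity
  have hwp₀ : dist w p₀ < ρ / 4 := by
    rw [Metric.mem_ball] at hw
    rw [hρdef]; linarith
  -- points of the closed ball have imaginary part ≥ ρ
  have hIm : ∀ z ∈ Metric.closedBall p₀ ρ, ρ ≤ z.im := by
    intro z hz
    rw [Metric.mem_closedBall] at hz
    have h1 : |(z - p₀).im| ≤ ‖z - p₀‖ := Complex.abs_im_le_norm _
    rw [← Complex.dist_eq] at h1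
    rw [Complex.sub_im] at h1
    have h2 : |z.im - p₀.im| ≤ ρ := le_trans h1 hz
    have := abs_le.1 h2
    rw [hρdef]; rw [hρdef] at this; linarith [this.1]
  have hsub : Metric.closedBall p₀ ρ ⊆ UH := by
    intro z hz
    exact lt_of_lt_of_le hρ (hIm z hz)
  have hwUH : w ∈ UH := hsub (by rw [Metric.mem_closedBall]; linarith)
  -- suppose u w < 0
  by_contra hne
  have huw : u w < 0 := lt_of_le_of_ne (hle w hwUH) hne
  -- the zero set inside the closed ball
  set T : Set ℂ := Metric.closedBall p₀ ρ ∩ u ⁻¹' {0} with hTdef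
  have hTclosed : IsClosed T :=
    ContinuousOn.preimage_isClosed_of_isClosed (hu.continuousOn.mono hsub)
      Metric.isClosed_closedBall isClosed_singleton
  have hTcomp : IsCompact T :=
    IsCompact.of_isClosed_subset (isCompact_closedBall p₀ ρ) hTclosed Set.inter_subset_left
  have hp₀T : p₀ ∈ T := ⟨Metric.mem_closedBall_self (le_of_lt hρ), hup₀⟩
  set r : ℝ := Metric.infDist w T with hrdef
  clear_value r
  obtain ⟨p₂, hp₂T, hp₂dist⟩ := hTcomp.exists_infDist_eq_dist ⟨p₀, hp₀T⟩ w
  have hrw : r = dist w p₂ := by rw [hrdef]; exact hp₂dist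
  have hrle : r < ρ / 4 := by
    rw [hrdef]
    exact lt_of_le_of_lt (Metric.infDist_le_dist_of_mem hp₀T) hwp₀
  have hrpos : 0 < r := by
    rcases lt_or_eq_of_le (Metric.infDist_nonneg (s := T) (x := w)) with h | h
    · rw [hrdef]; exact h
    · exfalso
      rw [← hrdef] at h
      rw [← h] at hrw
      have : w = p₂ := by
        have := hrw.symm
        rwa [dist_eq_zero] at this
      rw [this] at huw
      rw [hp₂T.2] at huw
      exact lt_irrefl 0 huw
  have hup₂ : u p₂ = 0 := hp₂T.2
  -- the closed ball around w of radius r sits inside the big closed ball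
  have hann_sub : ∀ z : ℂ, dist z w ≤ r → z ∈ Metric.closedBall p₀ ρ := by
    intro z hz
    rw [Metric.mem_closedBall]
    calc dist z p₀ ≤ dist z w + dist w p₀ := dist_triangle z w p₀
      _ ≤ r + ρ/4 := by linarith
      _ ≤ ρ := by linarith
  -- u is negative on the open ball around w
  have hballneg : ∀ z : ℂ, dist z w < r → u z < 0 := by
    intro z hz
    have hzB : z ∈ Metric.closedBall p₀ ρ := hann_sub z (le_of_lt hz)
    rcases lt_or_eq_of_le (hle z (hsub hzB)) with h | h
    · exact h
    · exfalso
      have hzT : z ∈ T := ⟨hzB, h⟩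
      have := Metric.infDist_le_dist_of_mem (x := w) hzT
      rw [dist_comm] at hz
      rw [← hrdef] at this
      linarith
  -- the elliptic inequality with constant coefficients
  set c : ℝ := 2 / ρ^2 with hcdef
  clear_value c
  have hc : 0 < c := by rw [hcdef]; positivity
  have hSc : ∀ z ∈ Metric.closedBall p₀ ρ, c * u z ≤
      fderiv ℝ (fderiv ℝ u) z 1 1 + fderiv ℝ (fderiv ℝ u) z Complex.I Complex.I := by
    intro z hz
    set Sz := fderiv ℝ (fderiv ℝ u) z 1 1 + fderiv ℝ (fderiv ℝ u) z Complex.I Complex.I with hSz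
    have h1 : 2 * u z ≤ z.im^2 * Sz := hS z (hsub hz)
    have h2 : u z ≤ 0 := hle z (hsub hz)
    have h3 : ρ ≤ z.im := hIm z hz
    rcases le_or_gt 0 Sz with h4 | h4
    · calc c * u z ≤ 0 := mul_nonpos_of_nonneg_of_nonpos (le_of_lt hc) h2
        _ ≤ Sz := h4
    · have h5 : z.im^2 * Sz ≤ ρ^2 * Sz := by
        apply mul_le_mul_of_nonpos_right _ (le_of_lt h4)
        nlinarith
      have h6 : 2 * u z ≤ ρ^2 * Sz := le_trans h1 h5
      rw [hcdef]
      rw [div_mul_eq_mul_div, div_le_iff₀ (by positivity)]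
      linarith [h6]
  -- choice of α
  set α : ℝ := (4 + 4/r^2) * (1 + c) with hαdef
  clear_value α
  have hα1 : 1 ≤ α := by
    rw [hαdef]
    have h1 : (0:ℝ) < 4/r^2 := by positivity
    nlinarith
  have hα0 : 0 < α := lt_of_lt_of_le one_pos hα1
  have hαr : 4*α + c ≤ α^2 * r^2 := by
    have hr2 : (0:ℝ) < r^2 := by positivity
    have h1 : α * r^2 = (4*r^2 + 4) * (1 + c) := by
      rw [hαdef]; field_simp <;> ring
    have h2 : 4 + c ≤ α * r^2 := by
      rw [h1]; nlinarith
    have h3 : α*(4+c) ≤ α*(α*r^2) := mul_le_mul_of_nonneg_left h2 (le_of_lt hα0)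
    have h4 : c ≤ α*c := le_mul_of_one_le_left (le_of_lt hc) hα1
    nlinarith [h3, h4]
  -- the barrier
  set hb : ℂ → ℝ := fun z => bar α w z - Real.exp (-α * r^2) with hbdef
  clear_value hb
  have hbarQ : ∀ z, bar α w z = Real.exp (-α * dist z w ^ 2) := by
    intro z
    rw [bar, hQ w z]
  -- ε from the max of u on inner sphere
  have hsph_ne : (Metric.sphere w (r/2)).Nonempty := by
    refine ⟨w + (r/2 : ℝ), ?_⟩
    simp only [Metric.mem_sphere, Complex.dist_eq, add_sub_cancel_left, Complex.norm_real, Real.norm_eq_abs]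
    rw [abs_of_pos (by positivity : (0:ℝ) < r/2)]
  have hsph_sub : Metric.sphere w (r/2) ⊆ UH := by
    intro z hz
    rw [Metric.mem_sphere] at hz
    exact hsub (hann_sub z (by rw [hz]; linarith))
  obtain ⟨m₀, hm₀sph, hm₀max⟩ := (isCompact_sphere w (r/2)).exists_isMaxOn hsph_ne
    (hu.continuousOn.mono hsph_sub)
  have hm₀neg : u m₀ < 0 := hballneg m₀ (by rw [Metric.mem_sphere] at hm₀sph; rw [hm₀sph]; linarith)
  set ε : ℝ := -(u m₀) with hεdef
  clear_value ε
  have hε : 0 < ε := by rw [hεdef]; linarith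
  set v : ℂ → ℝ := fun z => u z + ε * hb z with hvdef
  clear_value v
  -- annulus
  set AC : Set ℂ := Metric.closedBall w r \ Metric.ball w (r/2) with hACdef
  set A : Set ℂ := Metric.ball w r \ Metric.closedBall w (r/2) with hAdef
  have hACcomp : IsCompact AC := (isCompact_closedBall w r).diff Metric.isOpen_ball
  have hAopen : IsOpen A := Metric.isOpen_ball.sdiff Metric.isClosed_closedBall
  have hAAC : A ⊆ AC := fun z hz =>
    ⟨Metric.ball_subset_closedBall hz.1, fun h => hz.2 (Metric.ball_subset_closedBall h)⟩
  have hAC_ball : AC ⊆ Metric.closedBall p₀ ρ := fun z hz =>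
    hann_sub z (Metric.mem_closedBall.1 hz.1)
  have hAC_UH : AC ⊆ UH := fun z hz => hsub (hAC_ball hz)
  have hbCD : ContDiff ℝ 2 hb := by
    rw [hbdef]
    exact (bar_contDiff α w).sub contDiff_const
  have hvcont : ContinuousOn v AC := by
    rw [hvdef]
    apply ContinuousOn.add (hu.continuousOn.mono hAC_UH)
    exact (continuous_const.mul hbCD.continuous).continuousOn
  have hp₂AC : p₂ ∈ AC := by
    constructor
    · rw [Metric.mem_closedBall, dist_comm, ← hrw]
    · rw [Metric.mem_ball, dist_comm, ← hrw]
      intro h; linarith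
  obtain ⟨m, hmAC, hmmax⟩ := hACcomp.exists_isMaxOn ⟨p₂, hp₂AC⟩ hvcont
  -- v ≤ 0 on AC
  have hvle : ∀ z ∈ AC, v z ≤ 0 := by
    rcases le_or_gt (v m) 0 with hvm | hvm
    · exact fun z hz => le_trans (hmmax hz) hvm
    · exfalso
      -- m is in the open annulus
      have hmdist : r/2 ≤ dist m w ∧ dist m w ≤ r := by
        constructor
        · by_contra h; push_neg at h
          exact hmAC.2 (Metric.mem_ball.2 h)
        · exact Metric.mem_closedBall.1 hmAC.1
      have hmUH : m ∈ UH := hAC_UH hmAC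
      have hm_ne_r : dist m w ≠ r := by
        intro h
        have hbm : hb m = 0 := by
          simp only [hbdef]
          rw [hbarQ m, h, sub_self]
        have : v m = u m := by simp only [hvdef]; rw [hbm]; ring
        rw [this] at hvm
        exact absurd (hle m hmUH) (not_le.2 hvm)
      have hm_ne_r2 : dist m w ≠ r/2 := by
        intro h
        have hmsph : m ∈ Metric.sphere w (r/2) := Metric.mem_sphere.2 h
        have h1 : u m ≤ u m₀ := hm₀max hmsph
        have h2 : hb m ≤ 1 := by
          simp only [hbdef]
          have hb1 : bar α w m ≤ 1 := by
            rw [hbarQ m]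
            apply Real.exp_le_one_iff.2
            have : (0:ℝ) ≤ α * dist m w ^2 := by positivity
            linarith
          have : (0:ℝ) < Real.exp (-α * r^2) := Real.exp_pos _
          linarith
        have : v m ≤ u m₀ + ε * 1 := by
          simp only [hvdef]
          have := mul_le_mul_of_nonneg_left h2 (le_of_lt hε)
          linarith
        rw [hεdef] at this
        simp at this
        linarith
      have hmA : m ∈ A := by
        constructor
        · exact Metric.mem_ball.2 (lt_of_le_of_ne hmdist.2 hm_ne_r)
        · rw [Metric.mem_closedBall]; push_neg
          exact lt_of_le_of_ne hmdist.1 (Ne.symm hm_ne_r2)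
      -- v is C² on A
      have hvCD : ContDiffOn ℝ 2 v A := by
        rw [hvdef]
        apply ContDiffOn.add (hu.mono (fun z hz => hAC_UH (hAAC hz)))
        exact (contDiff_const.mul hbCD).contDiffOn
      have hmaxA : ∀ z ∈ A, v z ≤ v m := fun z hz => hmmax (hAAC hz)
      have hL1 : fderiv ℝ (fderiv ℝ v) m 1 1 ≤ 0 := maxLap hAopen hvCD hmA hmaxA 1
      have hLI : fderiv ℝ (fderiv ℝ v) m Complex.I Complex.I ≤ 0 :=
        maxLap hAopen hvCD hmA hmaxA Complex.I
      -- Laplacian additivity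
      have hadd1 := lap_add hUopen hu hbCD ε hmUH 1
      have haddI := lap_add hUopen hu hbCD ε hmUH Complex.I
      -- fderiv of hb equals fderiv of bar
      have hhb_eq : fderiv ℝ hb = fderiv ℝ (bar α w) := by
        funext ζ
        rw [hbdef]
        exact fderiv_sub_const _
      have hSv : fderiv ℝ (fderiv ℝ v) m 1 1 + fderiv ℝ (fderiv ℝ v) m Complex.I Complex.I
          = (fderiv ℝ (fderiv ℝ u) m 1 1 + fderiv ℝ (fderiv ℝ u) m Complex.I Complex.I)
            + ε * ((4*α^2*((m.re - w.re)^2 + (m.im - w.im)^2) - 4*α) * bar α w m) := by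
        simp only [hvdef]
        rw [hadd1, haddI, hhb_eq, ← bar_d2 α w m]
        ring
      -- assemble the contradiction
      have hSu : c * u m ≤ fderiv ℝ (fderiv ℝ u) m 1 1
          + fderiv ℝ (fderiv ℝ u) m Complex.I Complex.I := hSc m (hAC_ball hmAC)
      have hQm : r^2/4 ≤ (m.re - w.re)^2 + (m.im - w.im)^2 := by
        rw [hQ w m]
        have h1 : r/2 ≤ dist m w := hmdist.1
        nlinarith [dist_nonneg (x := m) (y := w)]
      have hbarpos : 0 < bar α w m := Real.exp_pos _
      have hbm_le : hb m ≤ bar α w m := by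
        simp only [hbdef]
        have : (0:ℝ) < Real.exp (-α * r^2) := Real.exp_pos _
        linarith
      have hbig : (4*α^2*((m.re - w.re)^2 + (m.im - w.im)^2) - 4*α) - c ≥ 0 := by
        have h1 : 4*α^2*((m.re - w.re)^2 + (m.im - w.im)^2) ≥ 4*α^2*(r^2/4) := by
          apply mul_le_mul_of_nonneg_left hQm (by positivity)
        nlinarith
      have hum : u m = v m - ε * hb m := by simp only [hvdef]; ring
      have hfinal : 0 < fderiv ℝ (fderiv ℝ v) m 1 1
          + fderiv ℝ (fderiv ℝ v) m Complex.I Complex.I := by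
        rw [hSv]
        have h1 : c * u m = c * v m - c * ε * hb m := by rw [hum]; ring
        have h2 : ε * (c * hb m) ≤ ε * (c * bar α w m) := by
          apply mul_le_mul_of_nonneg_left _ (le_of_lt hε)
          exact mul_le_mul_of_nonneg_left hbm_le (le_of_lt hc)
        have h3 : ε * ((4*α^2*((m.re - w.re)^2 + (m.im - w.im)^2) - 4*α) * bar α w m)
            ≥ ε * (c * bar α w m) := by
          apply mul_le_mul_of_nonneg_left _ (le_of_lt hε)
          apply mul_le_mul_of_nonneg_right _ (le_of_lt hbarpos)
          linarith
        nlinarith [mul_pos hc hvm]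
      linarith
  -- Now the boundary-derivative contradiction at p₂
  -- p₂ is a global max of u on UH
  have hp₂UH : p₂ ∈ UH := hsub hp₂T.1
  have hfd0 : fderiv ℝ u p₂ = 0 := by
    have hlm : IsLocalMax u p₂ := by
      apply Filter.eventually_of_mem (hUopen.mem_nhds hp₂UH)
      intro z hz
      rw [hup₂]
      exact hle z hz
    exact hlm.fderiv_eq_zero
  set ν : ℂ := w - p₂ with hνdef
  clear_value ν
  have hg0 : HasDerivAt (fun s : ℝ => u (p₂ + s • ν)) 0 0 := by
    have h1 := lineD (f := u) (z := p₂) (v := ν) (s := 0)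
      (by rw [zero_smul, add_zero]; exact diffAt_of_cd2 hUopen hu hp₂UH)
    rw [zero_smul, add_zero, hfd0] at h1
    simpa using h1
  set dψ : ℝ := -ε * (Real.exp (-α * r^2) * (2*α*r^2)) with hdψdef
  clear_value dψ
  have hψ : HasDerivAt (fun s : ℝ => -ε * (Real.exp (-α * ((1-s)^2 * r^2)) - Real.exp (-α * r^2)))
      dψ 0 := by
    have h1 : HasDerivAt (fun s : ℝ => (1:ℝ) - s) (-1) 0 := by
      simpa using (hasDerivAt_id (0:ℝ)).const_sub 1
    have h2 : HasDerivAt (fun s : ℝ => -α * ((1-s)^2 * r^2)) (2*α*r^2) 0 := by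
      have := (((h1.pow 2).mul_const (r^2)).const_mul (-α))
      refine this.congr_deriv ?_
      push_cast
      ring
    have h3 := h2.exp
    have h4 := (h3.sub_const (Real.exp (-α * r^2))).const_mul (-ε)
    refine h4.congr_deriv ?_
    rw [hdψdef]
    norm_num
  have hψ0 : dψ < 0 := by
    rw [hdψdef]
    have h1 : (0:ℝ) < Real.exp (-α * r^2) := Real.exp_pos _
    have h2 : (0:ℝ) < 2*α*r^2 := by positivity
    nlinarith [mul_pos hε (mul_pos h1 h2)]
  -- comparison on (0, 1/2)
  have hcomp : ∀ s ∈ Set.Ioo (0:ℝ) (1/2),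
      u (p₂ + s • ν) ≤ -ε * (Real.exp (-α * ((1-s)^2 * r^2)) - Real.exp (-α * r^2)) := by
    intro s hs
    set zs : ℂ := p₂ + s • ν with hzs
    have hdzs : dist zs w = (1-s) * r := by
      have h1 : zs - w = (1-s) • (p₂ - w) := by
        rw [hzs, hνdef]
        push_cast [Complex.real_smul]
        ring
      rw [Complex.dist_eq, h1]
      rw [Complex.real_smul, norm_mul, Complex.norm_real, Real.norm_eq_abs, ← Complex.dist_eq, dist_comm p₂ w, ← hrw]
      rw [abs_of_pos (by linarith [hs.2] : (0:ℝ) < 1 - s)]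
    have hzsAC : zs ∈ AC := by
      constructor
      · rw [Metric.mem_closedBall, hdzs]
        nlinarith [hs.1, hs.2, hrpos]
      · rw [Metric.mem_ball, hdzs]
        push_neg
        nlinarith [hs.1, hs.2, hrpos]
    have h1 : v zs ≤ 0 := hvle zs hzsAC
    have h2 : hb zs = Real.exp (-α * ((1-s)^2 * r^2)) - Real.exp (-α * r^2) := by
      simp only [hbdef]
      rw [hbarQ zs, hdzs]
      congr 2
      ring
    simp only [hvdef] at h1
    rw [h2] at h1
    linarith
  -- slopes
  have hg00 : u (p₂ + (0:ℝ) • ν) = 0 := by rw [zero_smul, add_zero, hup₂]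
  have hψ00 : -ε * (Real.exp (-α * ((1-(0:ℝ))^2 * r^2)) - Real.exp (-α * r^2)) = 0 := by
    norm_num
  have hIoosub : Set.Ioi (0:ℝ) ⊆ {(0:ℝ)}ᶜ := fun x hx => ne_of_gt hx
  have hslopeg : Filter.Tendsto (slope (fun s : ℝ => u (p₂ + s • ν)) 0)
      (nhdsWithin 0 (Set.Ioi (0:ℝ))) (nhds 0) :=
    (hasDerivAt_iff_tendsto_slope.1 hg0).mono_left (nhdsWithin_mono 0 hIoosub)
  have hslopeψ : Filter.Tendsto
      (slope (fun s : ℝ => -ε * (Real.exp (-α * ((1-s)^2 * r^2)) - Real.exp (-α * r^2))) 0)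
      (nhdsWithin 0 (Set.Ioi (0:ℝ))) (nhds dψ) :=
    (hasDerivAt_iff_tendsto_slope.1 hψ).mono_left (nhdsWithin_mono 0 hIoosub)
  have hevcomp : ∀ᶠ s in nhdsWithin 0 (Set.Ioi (0:ℝ)),
      slope (fun s : ℝ => u (p₂ + s • ν)) 0 s
        ≤ slope (fun s : ℝ => -ε * (Real.exp (-α * ((1-s)^2 * r^2)) - Real.exp (-α * r^2))) 0 s := by
    apply Filter.eventually_of_mem (Ioo_mem_nhdsGT_of_mem (by norm_num : (0:ℝ) ∈ Set.Ico 0 (1/2)))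
    intro s hs
    simp only [slope_def_field]
    rw [hg00, hψ00, sub_zero, sub_zero, sub_zero]
    exact (div_le_div_iff_of_pos_right hs.1).2 (hcomp s hs)
  have hfin : (0:ℝ) ≤ dψ := le_of_tendsto_of_tendsto hslopeg hslopeψ hevcomp
  linarith

end AuxiliaryLemmas

theorem gauss_solution_negative
    (Γ : Subgroup (Matrix.SpecialLinearGroup (Fin 2) ℝ))
    (hfree : ∀ γ ∈ Γ, γ ≠ 1 → ∀ z ∈ UH, moebius γ z ≠ z)
    (hdisc : ∀ K : Set ℂ, K ⊆ UH → IsCompact K →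
      {γ : Matrix.SpecialLinearGroup (Fin 2) ℝ | γ ∈ Γ ∧ ((moebius γ '' K) ∩ K).Nonempty}.Finite)
    (hcocompact : ∃ K : Set ℂ, K ⊆ UH ∧ IsCompact K ∧ ∀ z ∈ UH, ∃ γ ∈ Γ, moebius γ z ∈ K)
    (φ : ℂ → ℂ) (hφ : DifferentiableOn ℂ φ UH)
    (hφeq : ∀ γ ∈ Γ, ∀ z ∈ UH,
      φ (moebius γ z) = (((γ 1 0 : ℝ) : ℂ) * z + ((γ 1 1 : ℝ) : ℂ)) ^ 4 * φ z)
    (hφne : ∃ z ∈ UH, φ z ≠ 0)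
    (t : ℝ) (ht : 0 < t)
    (u : ℂ → ℝ) (hu : ContDiffOn ℝ 2 u UH) (huinv : GammaInv Γ u)
    (hgauss : GaussEq φ t u) :
    ∀ z ∈ UH, u z < 0 := by
  have hUo : IsOpen UH := hUopen
  -- the equation, written with iterated `fderiv`
  have heq : ∀ z ∈ UH, z.im^2 * (fderiv ℝ (fderiv ℝ u) z 1 1
      + fderiv ℝ (fderiv ℝ u) z Complex.I Complex.I)
      = Real.exp (2 * u z) - 1
        + t^2 * z.im^4 * ‖φ z‖^2 * Real.exp (-2 * u z) := by
    intro z hz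
    have h := hgauss z hz
    have h2 : hypLap u z = z.im^2 * (fderiv ℝ (fderiv ℝ u) z 1 1
        + fderiv ℝ (fderiv ℝ u) z Complex.I Complex.I) := by
      rw [hypLap, iteratedFDeriv_two_apply, iteratedFDeriv_two_apply]
      simp
    rw [h2] at h
    linarith
  have hP : ∀ z ∈ UH, 0 ≤ t^2 * z.im^4 * ‖φ z‖^2 * Real.exp (-2 * u z) := by
    intro z hz; positivity
  -- a maximum of u over UH exists, by cocompactness
  obtain ⟨K, hK1, hK2, hK3⟩ := hcocompact
  have hIUH : Complex.I ∈ UH := by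
    show (0:ℝ) < Complex.I.im
    simp
  obtain ⟨γ₀, hγ₀, hγ₀I⟩ := hK3 Complex.I hIUH
  obtain ⟨z₀, hz₀K, hz₀max⟩ := hK2.exists_isMaxOn ⟨_, hγ₀I⟩ (hu.continuousOn.mono hK1)
  have hz₀UH : z₀ ∈ UH := hK1 hz₀K
  have hmax : ∀ z ∈ UH, u z ≤ u z₀ := by
    intro z hz
    obtain ⟨γ, hγ, hγz⟩ := hK3 z hz
    rw [← huinv γ hγ z hz]
    exact hz₀max hγz
  -- the maximum value is ≤ 0
  have hz₀le : u z₀ ≤ 0 := by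
    have hL1 : fderiv ℝ (fderiv ℝ u) z₀ 1 1 ≤ 0 := maxLap hUo hu hz₀UH hmax 1
    have hLI : fderiv ℝ (fderiv ℝ u) z₀ Complex.I Complex.I ≤ 0 :=
      maxLap hUo hu hz₀UH hmax Complex.I
    have h := heq z₀ hz₀UH
    have hy : 0 < z₀.im := hz₀UH
    have h3 : z₀.im^2 * (fderiv ℝ (fderiv ℝ u) z₀ 1 1
        + fderiv ℝ (fderiv ℝ u) z₀ Complex.I Complex.I) ≤ 0 :=
      mul_nonpos_of_nonneg_of_nonpos (by positivity) (by linarith)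
    have h4 : Real.exp (2 * u z₀) ≤ 1 := by
      have := hP z₀ hz₀UH
      linarith
    have := Real.exp_le_one_iff.1 h4
    linarith
  have hle : ∀ z ∈ UH, u z ≤ 0 := fun z hz => le_trans (hmax z hz) hz₀le
  -- conclude
  intro z hz
  rcases lt_or_eq_of_le (hle z hz) with hlt | hzz
  · exact hlt
  exfalso
  -- hzz : u z = 0 ; derive the differential inequality needed for Hopf
  have hS : ∀ ζ ∈ UH, 2 * u ζ ≤ ζ.im^2 * (fderiv ℝ (fderiv ℝ u) ζ 1 1
      + fderiv ℝ (fderiv ℝ u) ζ Complex.I Complex.I) := by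
    intro ζ hζ
    rw [heq ζ hζ]
    have h1 := Real.add_one_le_exp (2 * u ζ)
    have h2 := hP ζ hζ
    linarith
  -- the zero set and the negative set are both open
  have hZopen : IsOpen {ζ : ℂ | ζ ∈ UH ∧ u ζ = 0} := by
    rw [Metric.isOpen_iff]
    intro p hp
    have hpim : 0 < p.im := hp.1
    refine ⟨p.im/8, by positivity, ?_⟩
    intro w hw
    have hwUH : w ∈ UH := by
      show (0:ℝ) < w.im
      rw [Metric.mem_ball] at hw
      have h1 : |(w - p).im| ≤ ‖w - p‖ := Complex.abs_im_le_norm _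
      rw [← Complex.dist_eq] at h1
      rw [Complex.sub_im] at h1
      have := abs_le.1 (le_trans h1 (le_of_lt hw))
      linarith [this.1]
    exact ⟨hwUH, hopf u hu hle hS hp.1 hp.2 hw⟩
  have hNopen : IsOpen {ζ : ℂ | ζ ∈ UH ∧ u ζ < 0} := by
    rw [isOpen_iff_mem_nhds]
    intro p hp
    have hcont : ContinuousAt u p := hu.continuousOn.continuousAt (hUo.mem_nhds hp.1)
    have h1 : ∀ᶠ ζ in nhds p, ζ ∈ UH :=
      Filter.eventually_of_mem (hUo.mem_nhds hp.1) (fun _ h => h)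
    have h2 : ∀ᶠ ζ in nhds p, u ζ < 0 := hcont.eventually_lt_const hp.2
    exact (h1.and h2)
  have hpre : IsPreconnected UH := (convex_halfSpace_im_gt 0).isPreconnected
  have hcover : UH ⊆ {ζ : ℂ | ζ ∈ UH ∧ u ζ = 0} ∪ {ζ : ℂ | ζ ∈ UH ∧ u ζ < 0} := by
    intro ζ hζ
    rcases lt_or_eq_of_le (hle ζ hζ) with h' | h'
    · exact Or.inr ⟨hζ, h'⟩
    · exact Or.inl ⟨hζ, h'⟩
  by_cases hNne : ∃ x, x ∈ UH ∧ u x < 0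
  · obtain ⟨x, hx⟩ := hNne
    obtain ⟨y, _, hyZ, hyN⟩ := hpre _ _ hZopen hNopen hcover
      ⟨z, hz, hz, hzz⟩ ⟨x, hx.1, hx⟩
    have := hyZ.2
    have := hyN.2
    linarith
  · -- u vanishes identically on UH : contradiction with φ ≠ 0 somewhere
    push_neg at hNne
    have hzero : ∀ ζ ∈ UH, u ζ = 0 := by
      intro ζ hζ
      rcases lt_or_eq_of_le (hle ζ hζ) with h' | h'
      · exact absurd h' (not_lt.2 (hNne ζ hζ))
      · exact h'
    obtain ⟨z₁, hz₁UH, hφz₁⟩ := hφne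
    have hfz : ∀ ζ ∈ UH, fderiv ℝ u ζ = 0 := by
      intro ζ hζ
      have hev : u =ᶠ[nhds ζ] fun _ => (0:ℝ) :=
        Filter.eventually_of_mem (hUo.mem_nhds hζ) hzero
      rw [hev.fderiv_eq]
      exact fderiv_const_apply 0
    have hff : fderiv ℝ (fderiv ℝ u) z₁ = 0 := by
      have hev : fderiv ℝ u =ᶠ[nhds z₁] fun _ => (0 : ℂ →L[ℝ] ℝ) :=
        Filter.eventually_of_mem (hUo.mem_nhds hz₁UH) hfz
      rw [hev.fderiv_eq]
      exact fderiv_const_apply 0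
    have h := heq z₁ hz₁UH
    rw [hzero z₁ hz₁UH, hff] at h
    norm_num at h
    have hy : 0 < z₁.im := hz₁UH
    rcases h with (h | h) | h
    · exact absurd h (ne_of_gt ht)
    · exact absurd h (ne_of_gt hy)
    · exact hφz₁ h


end
end

section
/- Let φ be a holomorphic quadratic differential on the closed surface S = ℍ/Γ (of genus g ≥ 2) which is not identically zero. Then φ must vanish somewhere: there exists z ∈ ℍ with φ(z) = 0. (Otherwise y²|φ| would induce a smooth flat metric |φ||dz|² on S, violating the Gauss–Bonnet theorem.) -/
open Complex MeasureTheory Real Filter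

noncomputable section

lemma moebius_denom_ne_zero (γ : Matrix.SpecialLinearGroup (Fin 2) ℝ) (z : ℂ)
    (hz : 0 < z.im) : (((γ 1 0 : ℝ) : ℂ) * z + ((γ 1 1 : ℝ) : ℂ)) ≠ 0 := by
  intro h
  have hdet : γ 0 0 * γ 1 1 - γ 0 1 * γ 1 0 = 1 := by
    have := γ.2; rwa [Matrix.det_fin_two] at this
  have him : (γ 1 0 : ℝ) * z.im = 0 := by
    have := congrArg Complex.im h; simpa using this
  have hc : (γ 1 0 : ℝ) = 0 := by
    rcases mul_eq_zero.1 him with h'|h'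
    · exact h'
    · exact absurd h' (ne_of_gt hz)
  have hre : (γ 1 0 : ℝ) * z.re + γ 1 1 = 0 := by
    have := congrArg Complex.re h; simpa using this
  have hd : (γ 1 1 : ℝ) = 0 := by rw [hc] at hre; linarith
  rw [hc, hd] at hdet; simp at hdet

lemma moebius_im (γ : Matrix.SpecialLinearGroup (Fin 2) ℝ) (z : ℂ) :
    (moebius γ z).im
      = z.im / Complex.normSq (((γ 1 0 : ℝ) : ℂ) * z + ((γ 1 1 : ℝ) : ℂ)) := by
  have hdet : γ 0 0 * γ 1 1 - γ 0 1 * γ 1 0 = 1 := by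
    have := γ.2; rwa [Matrix.det_fin_two] at this
  rw [moebius, Complex.div_im, div_sub_div_same]
  congr 1
  simp only [Complex.add_im, Complex.add_re, Complex.mul_im, Complex.mul_re,
    Complex.ofReal_re, Complex.ofReal_im]
  ring_nf
  linear_combination z.im * hdet

theorem holomorphic_quadratic_differential_vanishes
    (Γ : Subgroup (Matrix.SpecialLinearGroup (Fin 2) ℝ))
    (hfree : ∀ γ ∈ Γ, γ ≠ 1 → ∀ z ∈ UH, moebius γ z ≠ z)
    (hdisc : ∀ K : Set ℂ, K ⊆ UH → IsCompact K →
      {γ : Matrix.SpecialLinearGroup (Fin 2) ℝ | γ ∈ Γ ∧ ((moebius γ '' K) ∩ K).Nonempty}.Finite)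
    (hcocompact : ∃ K : Set ℂ, K ⊆ UH ∧ IsCompact K ∧ ∀ z ∈ UH, ∃ γ ∈ Γ, moebius γ z ∈ K)
    (φ : ℂ → ℂ) (hφ : DifferentiableOn ℂ φ UH)
    (hφeq : ∀ γ ∈ Γ, ∀ z ∈ UH,
      φ (moebius γ z) = (((γ 1 0 : ℝ) : ℂ) * z + ((γ 1 1 : ℝ) : ℂ)) ^ 4 * φ z)
    (hφne : ∃ z ∈ UH, φ z ≠ 0) :
    ∃ z ∈ UH, φ z = 0 := by
  by_contra hcon
  push_neg at hcon
  -- hcon : ∀ z ∈ UH, φ z ≠ 0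
  obtain ⟨K, hKU, hKc, hKcov⟩ := hcocompact
  have hIU : (Complex.I : ℂ) ∈ UH := by simp [UH]
  obtain ⟨γI, _, hγIK⟩ := hKcov Complex.I hIU
  have hKne : K.Nonempty := ⟨_, hγIK⟩
  set h : ℂ → ℝ := fun z => z.im ^ 2 * ‖φ z‖ with hdef
  have hconth : ContinuousOn h UH := by
    apply ContinuousOn.mul
    · exact (Complex.continuous_im.pow 2).continuousOn
    · exact continuous_norm.comp_continuousOn hφ.continuousOn
  obtain ⟨z0, hz0K, hz0min⟩ := hKc.exists_isMinOn hKne (hconth.mono hKU)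
  have hz0U : z0 ∈ UH := hKU hz0K
  have hy0 : 0 < z0.im := hz0U
  -- invariance of h
  have hinv : ∀ γ ∈ Γ, ∀ z ∈ UH, h (moebius γ z) = h z := by
    intro γ hγ z hz
    have hzim : 0 < z.im := hz
    have hnsq : 0 < Complex.normSq (((γ 1 0 : ℝ) : ℂ) * z + ((γ 1 1 : ℝ) : ℂ)) := by
      rcases (Complex.normSq_pos).2 (moebius_denom_ne_zero γ z hzim) with h'
      exact h'
    have habs : ‖φ (moebius γ z)‖
        = Complex.normSq (((γ 1 0 : ℝ) : ℂ) * z + ((γ 1 1 : ℝ) : ℂ)) ^ 2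
          * ‖φ z‖ := by
      rw [hφeq γ hγ z hz, norm_mul, norm_pow, ← Complex.sq_norm]
      ring
    simp only [hdef, moebius_im γ z, habs]
    field_simp
  -- global minimum
  have hmin : ∀ z ∈ UH, h z0 ≤ h z := by
    intro z hz
    obtain ⟨γ, hγ, hγK⟩ := hKcov z hz
    have h2 : h z0 ≤ h (moebius γ z) := hz0min hγK
    rw [hinv γ hγ z hz] at h2
    exact h2
  have hp : 0 < ‖φ z0‖ := by
    simpa using (hcon z0 hz0U)
  have hm : 0 < h z0 := mul_pos (pow_pos hy0 2) hp
  -- the auxiliary holomorphic function H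
  set H : ℂ → ℂ := fun z => φ z * (z - (starRingEnd ℂ) z0) ^ 4 with Hdef
  have hHne : ∀ z ∈ UH, H z ≠ 0 := by
    intro z hz
    apply mul_ne_zero (hcon z hz)
    apply pow_ne_zero
    intro h'
    have : z.im - (-z0.im) = 0 := by
      have := congrArg Complex.im h'
      simpa [Complex.sub_im, Complex.conj_im] using this
    have hzim : 0 < z.im := hz
    linarith
  have hUopen : IsOpen UH := isOpen_lt continuous_const Complex.continuous_im
  have hHdiff : DifferentiableOn ℂ H UH := by
    apply hφ.mul
    apply DifferentiableOn.pow
    exact (differentiable_id.sub_const _).differentiableOn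
  set F : ℂ → ℂ := fun z => (H z)⁻¹ with Fdef
  have hFdiff : DifferentiableOn ℂ F UH := hHdiff.inv hHne
  -- norms
  have habsH : ∀ z : ℂ, ‖H z‖
      = ‖φ z‖ * ‖z - (starRingEnd ℂ) z0‖ ^ 4 := by
    intro z; simp [Hdef, map_mul, map_pow]
  have hsub_abs : ∀ z : ℂ, 0 < z.im → z.im + z0.im ≤ ‖z - (starRingEnd ℂ) z0‖ := by
    intro z hz
    have h1 : (z - (starRingEnd ℂ) z0).im = z.im + z0.im := by
      simp [Complex.sub_im, Complex.conj_im]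
    calc z.im + z0.im = (z - (starRingEnd ℂ) z0).im := h1.symm
      _ ≤ |(z - (starRingEnd ℂ) z0).im| := le_abs_self _
      _ ≤ ‖z - (starRingEnd ℂ) z0‖ := Complex.abs_im_le_norm _
  have habsHz0 : ‖H z0‖ = ‖φ z0‖ * (2 * z0.im) ^ 4 := by
    have heq2 : z0 - (starRingEnd ℂ) z0 = (2 * z0.im : ℝ) * Complex.I := by
      rw [Complex.sub_conj]
    have habs2 : ‖((2 * z0.im : ℝ) : ℂ) * Complex.I‖ = 2 * z0.im := by
      rw [norm_mul, Complex.norm_I, mul_one, Complex.norm_real, Real.norm_eq_abs]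
      exact abs_of_pos (by linarith)
    rw [habsH, heq2, habs2]
  -- |H z| ≥ 16 y0² h z ≥ 16 y0² h z0 = |H z0|
  have hlow : ∀ z ∈ UH, 16 * z0.im ^ 2 * h z ≤ ‖H z‖ := by
    intro z hz
    have hzim : 0 < z.im := hz
    have hA := hsub_abs z hzim
    have hA0 : (0:ℝ) ≤ ‖z - (starRingEnd ℂ) z0‖ := norm_nonneg _
    have hφ0 : (0:ℝ) ≤ ‖φ z‖ := norm_nonneg _
    rw [habsH]
    have key : 16 * z0.im ^ 2 * z.im ^ 2 ≤ ‖z - (starRingEnd ℂ) z0‖ ^ 4 := by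
      have h4 : (z.im + z0.im) ^ 4 ≤ ‖z - (starRingEnd ℂ) z0‖ ^ 4 :=
        pow_le_pow_left₀ (by linarith) hA 4
      nlinarith [mul_nonneg (sq_nonneg (z.im - z0.im)) (sq_nonneg (z.im + z0.im)),
        mul_nonneg (mul_nonneg (sq_nonneg (z.im - z0.im)) hzim.le) hy0.le]
    calc 16 * z0.im ^ 2 * h z = ‖φ z‖ * (16 * z0.im ^ 2 * z.im ^ 2) := by
          simp [hdef]; ring
      _ ≤ ‖φ z‖ * ‖z - (starRingEnd ℂ) z0‖ ^ 4 := by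
          exact mul_le_mul_of_nonneg_left key hφ0
  have hHz0val : ‖H z0‖ = 16 * z0.im ^ 2 * h z0 := by
    rw [habsHz0]; simp [hdef]; ring
  have hmax : IsMaxOn (norm ∘ F) UH z0 := by
    intro z hz
    simp only [Function.comp_apply, Fdef, norm_inv]
    have h1 : ‖H z0‖ ≤ ‖H z‖ :=
      hHz0val ▸ le_trans (by nlinarith [hmin z hz, sq_nonneg z0.im, hy0]) (hlow z hz)
    exact inv_anti₀ (hHz0val ▸ (by positivity)) h1
  have hconvex : Convex ℝ UH := convex_halfSpace_im_gt 0
  have heq : Set.EqOn F (Function.const ℂ (F z0)) UH :=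
    Complex.eqOn_of_isPreconnected_of_isMaxOn_norm hconvex.isPreconnected hUopen hFdiff hz0U hmax
  -- evaluate at z = 5 y0 i
  set T : ℝ := 5 * z0.im with Tdef
  have hT : 0 < T := by positivity
  set w : ℂ := (T : ℝ) * Complex.I with wdef
  have hwU : w ∈ UH := by
    show 0 < w.im
    simp [wdef, hT]
  have hHw : H w = H z0 := by
    have h1 := heq hwU
    have h2 : (H w)⁻¹ = (H z0)⁻¹ := h1
    exact inv_injective h2
  have hq : 0 < ‖φ w‖ := by simpa using hcon w hwU
  have hwim : w.im = T := by simp [wdef]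
  -- the contradiction
  have hAw := hsub_abs w (by rw [hwim]; exact hT)
  rw [hwim] at hAw
  have hHweq : ‖φ w‖ * ‖w - (starRingEnd ℂ) z0‖ ^ 4
      = ‖φ z0‖ * (2 * z0.im) ^ 4 := by
    rw [← habsH, hHw, habsHz0]
  have hminw := hmin w hwU
  rw [hdef] at hminw
  simp only [hwim] at hminw
  -- hminw : z0.im ^ 2 * abs (φ z0) ≤ T ^ 2 * abs (φ w)
  have hp25 : ‖φ z0‖ ≤ 25 * ‖φ w‖ := by
    have hT2 : T ^ 2 = 25 * z0.im ^ 2 := by rw [Tdef]; ring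
    rw [hT2] at hminw
    nlinarith [mul_pos hy0 hy0]
  have hA4 : (6 * z0.im) ^ 4 ≤ ‖w - (starRingEnd ℂ) z0‖ ^ 4 := by
    apply pow_le_pow_left₀ (by positivity)
    rw [Tdef] at hAw
    linarith
  have h81 : 81 * ‖φ w‖ ≤ ‖φ z0‖ := by
    have h1 : ‖φ w‖ * (6 * z0.im) ^ 4
        ≤ ‖φ w‖ * ‖w - (starRingEnd ℂ) z0‖ ^ 4 :=
      mul_le_mul_of_nonneg_left hA4 hq.le
    rw [hHweq] at h1
    nlinarith [pow_pos hy0 4]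
  linarith

end
end
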